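/- Let \mu be a finite Borel measure on \mathbb{R} with all moments finite. For Borel sets \partial define \mu_n(\partial) := \int_\partial (1+x^2)^n d\mu(x). If the polynomials are dense in L_2(\mathbb{R}, \mu_{n+1}) then the polynomials are dense in L_2(\mathbb{R}, \mu_n); consequently the set \{n : \text{polynomials dense in } L_2(\mathbb{R},\mu_n)\} is downward closed and the index of determinacy is well defined as its supremum. -/

import Mathlib

open MeasureTheory Polynomial
open scoped ENNReal

/-- The (real) polynomials are dense in `L₂(ℝ, μ)`. -/
def PolyDense (μ : Measure ℝ) : Prop :=
  Dense {f : Lp ℝ 2 μ | ∃ p : Polynomial ℝ, (f : ℝ → ℝ) =ᵐ[μ] fun t : ℝ => p.eval t}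

/-- The measure `μ_n(∂) = ∫_∂ (1+x²)ⁿ dμ`. -/
noncomputable def weightPow (μ : Measure ℝ) (n : ℕ) : Measure ℝ :=
  μ.withDensity fun x => ENNReal.ofReal ((1 + x ^ 2) ^ n)

lemma weightPow_succ (μ : Measure ℝ) (n : ℕ) :
    weightPow μ (n + 1) =
      (weightPow μ n).withDensity (fun x => ENNReal.ofReal (1 + x ^ 2)) := by
  unfold weightPow
  rw [← withDensity_mul _ (by fun_prop) (by fun_prop)]
  congr 1
  funext x
  simp only [Pi.mul_apply]
  rw [pow_succ, ENNReal.ofReal_mul (by positivity)]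

lemma weightPow_le_succ (μ : Measure ℝ) (n : ℕ) :
    weightPow μ n ≤ weightPow μ (n + 1) := by
  refine withDensity_mono (Filter.Eventually.of_forall fun x => ?_)
  exact ENNReal.ofReal_le_ofReal
    (pow_le_pow_right₀ (by nlinarith [sq_nonneg x]) (Nat.le_succ n))

lemma polyDense_step (μ : Measure ℝ) (n : ℕ)
    (h : PolyDense (weightPow μ (n + 1))) : PolyDense (weightPow μ n) := by
  set ν : Measure ℝ := weightPow μ n with hν
  set ν' : Measure ℝ := weightPow μ (n + 1) with hν'
  have hw : ν' = ν.withDensity (fun x => ENNReal.ofReal (1 + x ^ 2)) :=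
    weightPow_succ μ n
  have hle : ν ≤ ν' := weightPow_le_succ μ n
  intro f
  rw [Metric.mem_closure_iff]
  intro ε hε
  have hF : MemLp (⇑f) 2 ν := Lp.memLp f
  set G : ℝ → ℝ := hF.1.mk ⇑f with hGdef
  have hGsm : StronglyMeasurable G := hF.1.stronglyMeasurable_mk
  have hGm : Measurable G := hGsm.measurable
  have hFG : ⇑f =ᵐ[ν] G := hF.1.ae_eq_mk
  have hGmem : MemLp G 2 ν := hF.ae_eq hFG
  -- finiteness of the squared integral
  have hIfin : ∫⁻ x, (‖G x‖₊ : ENNReal) ^ (2 : ℝ) ∂ν ≠ ∞ := by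
    have h2 := hGmem.2
    rw [eLpNorm_eq_lintegral_rpow_enorm_toReal two_ne_zero ENNReal.ofNat_ne_top] at h2
    simp only [ENNReal.toReal_ofNat, enorm_eq_nnnorm] at h2
    intro hcontra
    rw [hcontra] at h2
    simp [ENNReal.top_rpow_of_pos (by norm_num : (0:ℝ) < 1/2)] at h2
  set ρ : Measure ℝ := ν.withDensity (fun x => (‖G x‖₊ : ENNReal) ^ (2 : ℝ)) with hρ
  have hρmeas : Measurable (fun x => (‖G x‖₊ : ENNReal) ^ (2 : ℝ)) := by fun_prop
  have hρfin : ρ Set.univ ≠ ∞ := by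
    rw [hρ, withDensity_apply _ MeasurableSet.univ, Measure.restrict_univ]
    exact hIfin
  -- the tail sets
  set A : ℕ → Set ℝ := fun k => {x : ℝ | (k : ℝ) < |x|} with hA
  have hAmeas : ∀ k, MeasurableSet (A k) :=
    fun k => measurableSet_lt measurable_const measurable_abs
  have hAanti : Antitone A := by
    intro k l hkl x hx
    exact lt_of_le_of_lt (by exact_mod_cast hkl : (k:ℝ) ≤ l) hx
  have hAinter : ⋂ k, A k = ∅ := by
    ext x
    simp only [Set.mem_iInter, Set.mem_empty_iff_false, iff_false, not_forall]
    obtain ⟨k, hk⟩ := exists_nat_gt |x|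
    exact ⟨k, by simpa [hA] using hk.le⟩
  have htend : Filter.Tendsto (ρ ∘ A) Filter.atTop (nhds 0) := by
    have := tendsto_measure_iInter_atTop (μ := ρ)
      (fun k => (hAmeas k).nullMeasurableSet) hAanti
      ⟨0, ne_top_of_le_ne_top hρfin (measure_mono (Set.subset_univ _))⟩
    rwa [hAinter, measure_empty] at this
  have hrhs_pos : (0 : ENNReal) < (ENNReal.ofReal (ε / 2)) ^ (2 : ℝ) :=
    ENNReal.rpow_pos (ENNReal.ofReal_pos.mpr (half_pos hε)) ENNReal.ofReal_ne_top
  obtain ⟨k, hk⟩ := (htend.eventually_lt_const hrhs_pos).exists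
  -- the truncation
  set s : Set ℝ := {x : ℝ | |x| ≤ (k : ℝ)} with hs_def
  have hs : MeasurableSet s := measurableSet_le measurable_abs measurable_const
  have hsc : sᶜ = A k := by
    ext x; simp [hs_def, hA, not_le]
  set g : ℝ → ℝ := s.indicator G with hg_def
  have hgsm : StronglyMeasurable g := hGsm.indicator hs
  -- Step 1 : eLpNorm (f - g) over ν is small
  have hsub : (fun x => (f : ℝ → ℝ) x - g x) =ᵐ[ν] sᶜ.indicator G := by
    filter_upwards [hFG] with x hx
    by_cases hxs : x ∈ s <;>
      simp [hx, hg_def, Set.indicator, hxs]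
  have hindnorm : eLpNorm (sᶜ.indicator G) 2 ν = (ρ (A k)) ^ (1 / 2 : ℝ) := by
    rw [eLpNorm_eq_lintegral_rpow_enorm_toReal two_ne_zero ENNReal.ofNat_ne_top]
    simp only [ENNReal.toReal_ofNat, enorm_eq_nnnorm]
    congr 1
    rw [hρ, withDensity_apply _ ((hAmeas k)), ← hsc,
      ← lintegral_indicator hs.compl]
    congr 1
    funext x
    by_cases hxs : x ∈ sᶜ
    · simp [Set.indicator, hxs]
    · simp [Set.indicator, hxs, ENNReal.zero_rpow_of_pos (by norm_num : (0:ℝ) < 2)]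
  have h1 : eLpNorm (fun x => (f : ℝ → ℝ) x - g x) 2 ν < ENNReal.ofReal (ε / 2) := by
    rw [eLpNorm_congr_ae hsub, hindnorm]
    calc (ρ (A k)) ^ (1 / 2 : ℝ)
        < ((ENNReal.ofReal (ε / 2)) ^ (2 : ℝ)) ^ (1 / 2 : ℝ) :=
          ENNReal.rpow_lt_rpow hk (by norm_num)
      _ = ENNReal.ofReal (ε / 2) := by
          rw [← ENNReal.rpow_mul]; norm_num
  -- Step 2 : g ∈ L²(ν')
  have hgmem' : MemLp g 2 ν' := by
    refine ⟨hgsm.aestronglyMeasurable, ?_⟩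
    rw [eLpNorm_eq_lintegral_rpow_enorm_toReal two_ne_zero ENNReal.ofNat_ne_top]
    simp only [ENNReal.toReal_ofNat, enorm_eq_nnnorm]
    refine ENNReal.rpow_lt_top_of_nonneg (by norm_num) ?_
    have hgρmeas : Measurable (fun x => (‖g x‖₊ : ENNReal) ^ (2 : ℝ)) := by
      have := hgsm.measurable; fun_prop
    rw [hw, lintegral_withDensity_eq_lintegral_mul ν (by fun_prop) hgρmeas]
    have hbound : ∀ x : ℝ,
        ((fun x => ENNReal.ofReal (1 + x ^ 2)) * fun x => (‖g x‖₊ : ENNReal) ^ (2 : ℝ)) x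
          ≤ ENNReal.ofReal (1 + (k : ℝ) ^ 2) * (‖G x‖₊ : ENNReal) ^ (2 : ℝ) := by
      intro x
      simp only [Pi.mul_apply]
      by_cases hxs : x ∈ s
      · have hx2 : x ^ 2 ≤ (k : ℝ) ^ 2 := by
          have : |x| ≤ (k : ℝ) := hxs
          nlinarith [abs_nonneg x, sq_abs x]
        refine mul_le_mul' (ENNReal.ofReal_le_ofReal (by linarith)) ?_
        simp [hg_def, Set.indicator, hxs]
      · simp [hg_def, Set.indicator, hxs,
          ENNReal.zero_rpow_of_pos (by norm_num : (0:ℝ) < 2)]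
    apply ne_of_lt
    calc ∫⁻ x, ((fun x => ENNReal.ofReal (1 + x ^ 2)) *
            fun x => (‖g x‖₊ : ENNReal) ^ (2 : ℝ)) x ∂ν
        ≤ ∫⁻ x, ENNReal.ofReal (1 + (k : ℝ) ^ 2) * (‖G x‖₊ : ENNReal) ^ (2 : ℝ) ∂ν :=
          lintegral_mono hbound
      _ = ENNReal.ofReal (1 + (k : ℝ) ^ 2) * ∫⁻ x, (‖G x‖₊ : ENNReal) ^ (2 : ℝ) ∂ν :=
          lintegral_const_mul _ hρmeas
      _ < ∞ := ENNReal.mul_lt_top ENNReal.ofReal_lt_top hIfin.lt_top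
  -- use density in L²(ν')
  set gLp : Lp ℝ 2 ν' := hgmem'.toLp g with hgLp
  obtain ⟨b, hbS, hbdist⟩ := Metric.mem_closure_iff.mp (h gLp) (ε / 2) (half_pos hε)
  obtain ⟨p, hbp⟩ := hbS
  have hcoe_sub : (⇑gLp - ⇑b) =ᵐ[ν'] fun x => g x - p.eval x := by
    filter_upwards [hgmem'.coeFn_toLp, hbp] with x h1x h2x
    simp [hgLp, h1x, h2x]
  have hsub_ne_top : eLpNorm (⇑gLp - ⇑b) 2 ν' ≠ ∞ := by
    rw [eLpNorm_congr_ae (Lp.coeFn_sub gLp b).symm]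
    exact Lp.eLpNorm_ne_top (gLp - b)
  have h2' : eLpNorm (fun x => g x - p.eval x) 2 ν' < ENNReal.ofReal (ε / 2) := by
    rw [← eLpNorm_congr_ae hcoe_sub]
    rw [Lp.dist_def] at hbdist
    exact (ENNReal.lt_ofReal_iff_toReal_lt hsub_ne_top).mpr hbdist
  have h2 : eLpNorm (fun x => g x - p.eval x) 2 ν < ENNReal.ofReal (ε / 2) :=
    lt_of_le_of_lt (eLpNorm_mono_measure _ hle) h2'
  -- the polynomial is in L²(ν)
  have hpe' : MemLp (fun t : ℝ => p.eval t) 2 ν' := (Lp.memLp b).ae_eq hbp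
  have hpe : MemLp (fun t : ℝ => p.eval t) 2 ν := hpe'.mono_measure hle
  refine ⟨hpe.toLp _, ⟨p, hpe.coeFn_toLp⟩, ?_⟩
  rw [Lp.dist_def]
  have hcongr : (⇑f - ⇑(hpe.toLp _)) =ᵐ[ν]
      (fun x => ((fun x => (f : ℝ → ℝ) x - g x) x + (fun x => g x - p.eval x) x)) := by
    filter_upwards [hpe.coeFn_toLp] with x hx
    simp only [Pi.sub_apply, hx]
    ring
  have htri : eLpNorm (⇑f - ⇑(hpe.toLp _)) 2 ν < ENNReal.ofReal ε := by
    rw [eLpNorm_congr_ae hcongr]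
    calc eLpNorm (fun x => ((fun x => (f : ℝ → ℝ) x - g x) x
            + (fun x => g x - p.eval x) x)) 2 ν
        ≤ eLpNorm (fun x => (f : ℝ → ℝ) x - g x) 2 ν
            + eLpNorm (fun x => g x - p.eval x) 2 ν :=
          eLpNorm_add_le (hF.1.sub hgsm.aestronglyMeasurable)
            (hgsm.aestronglyMeasurable.sub
              (Polynomial.continuous p).aestronglyMeasurable) one_le_two
      _ < ENNReal.ofReal (ε / 2) + ENNReal.ofReal (ε / 2) := ENNReal.add_lt_add h1 h2
      _ = ENNReal.ofReal ε := by
          rw [← ENNReal.ofReal_add (by linarith) (by linarith)]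
          norm_num
  exact ENNReal.toReal_lt_of_lt_ofReal htri

/-- Let `μ` be a finite Borel measure with all moments finite and
`μ_n(∂) = ∫_∂ (1+x²)ⁿ dμ`.  If the polynomials are dense in `L₂(ℝ, μ_{n+1})`, then
they are dense in `L₂(ℝ, μ_n)`; consequently the set
`{n : polynomials dense in L₂(ℝ, μ_n)}` is downward closed (so the index of
determinacy is well defined as its supremum). -/
theorem stmt19 (μ : Measure ℝ) [IsFiniteMeasure μ]
    (hmom : ∀ k : ℕ, Integrable (fun x : ℝ => x ^ k) μ) :
    (∀ n : ℕ, PolyDense (weightPow μ (n + 1)) → PolyDense (weightPow μ n)) ∧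
    ∀ m n : ℕ, m ≤ n → PolyDense (weightPow μ n) → PolyDense (weightPow μ m) := by
  refine ⟨polyDense_step μ, ?_⟩
  intro m n hmn
  induction n, hmn using Nat.le_induction with
  | base => exact id
  | succ n hmn ih => exact fun h => ih (polyDense_step μ n h)
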